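/- Every mesonic glide of a weak composition a is also a glide of a; moreover, if b ≥ a in dominance order and b⁺ = a⁺, then every mesonic glide of b is a glide of a. -/

import Mathlib

abbrev Komp : Type := List (ℕ × Bool)

def kex (g : Komp) : ℕ := (g.filter (fun p => p.2)).length

def kval (g : Komp) : List ℕ := g.map Prod.fst

def toKomp (a : List ℕ) : Komp := a.map (fun v => (v, false))

inductive GlideMove : Komp → Komp → Prop
  | m1 (l r : Komp) (p : ℕ) (c : Bool) (hp : 0 < p) :
      GlideMove (l ++ (0, false) :: (p, c) :: r) (l ++ (p, c) :: (0, false) :: r)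
  | m2 (l r : Komp) (p q s : ℕ) (c : Bool) (hq : 0 < q) (hs : 0 < s) (h : q + s = p) :
      GlideMove (l ++ (0, false) :: (p, c) :: r) (l ++ (q, c) :: (s, false) :: r)
  | m3 (l r : Komp) (p q s : ℕ) (c : Bool) (hq : 0 < q) (hs : 0 < s) (h : q + s = p + 1) :
      GlideMove (l ++ (0, false) :: (p, c) :: r) (l ++ (q, c) :: (s, true) :: r)

def IsGlide (a : List ℕ) (g : Komp) : Prop :=
  Relation.ReflTransGen GlideMove (toKomp a) g

def BlackFirst (seg : Komp) : Prop :=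
  ∀ p ∈ (seg.dropWhile fun q => q.1 == 0).head?, p.2 = false

def IsBlock (v : ℕ) (seg : Komp) : Prop :=
  (kval seg).sum = v + kex seg ∧
  (∀ p ∈ seg, p.2 = true → 0 < p.1) ∧
  BlackFirst seg ∧
  (∀ p ∈ seg.getLast?, p.1 ≠ 0)

inductive MesonicGlide : List ℕ → Komp → Prop
  | zeros (k : ℕ) :
      MesonicGlide (List.replicate k 0) (List.replicate k ((0 : ℕ), false))
  | block (z v : ℕ) (hv : 0 < v) (seg : Komp) (a' : List ℕ) (g' : Komp)
      (hlen : seg.length = z + 1) (hseg : IsBlock v seg)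
      (h : MesonicGlide a' g') :
      MesonicGlide (List.replicate z 0 ++ v :: a') (seg ++ g')
def Dominates (b a : List ℕ) : Prop :=
  b.length = a.length ∧ ∀ i : ℕ, (a.take i).sum ≤ (b.take i).sum

def posPart (a : List ℕ) : List ℕ := a.filter (fun v => v != 0)

open Relation List

lemma GlideMove.ctx {g h : Komp} (c e : Komp) (H : GlideMove g h) :
    GlideMove (c ++ g ++ e) (c ++ h ++ e) := by
  cases H with
  | m1 l r p cc hp =>
      simpa [List.append_assoc] using GlideMove.m1 (c ++ l) (r ++ e) p cc hp
  | m2 l r p q s cc hq hs h =>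
      simpa [List.append_assoc] using GlideMove.m2 (c ++ l) (r ++ e) p q s cc hq hs h
  | m3 l r p q s cc hq hs h =>
      simpa [List.append_assoc] using GlideMove.m3 (c ++ l) (r ++ e) p q s cc hq hs h

lemma reach_ctx (c e : Komp) {g h : Komp}
    (H : ReflTransGen GlideMove g h) :
    ReflTransGen GlideMove (c ++ g ++ e) (c ++ h ++ e) :=
  ReflTransGen.lift (fun x => c ++ x ++ e) (fun _ _ hm => GlideMove.ctx c e hm) _ _ H

lemma bubble (c e : Komp) (p : ℕ) (cc : Bool) (hp : 0 < p) :
    ∀ d : ℕ, ReflTransGen GlideMove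
      (c ++ List.replicate d ((0:ℕ), false) ++ (p, cc) :: e)
      (c ++ (p, cc) :: (List.replicate d ((0:ℕ), false) ++ e))
  | 0 => by
      simp only [List.replicate, List.nil_append, List.append_nil]
      exact ReflTransGen.refl
  | (d+1) => by
      have step : GlideMove
          (c ++ List.replicate (d+1) ((0:ℕ),false) ++ (p,cc) :: e)
          (c ++ List.replicate d ((0:ℕ),false) ++ (p,cc) :: ((0:ℕ),false) :: e) := by
        simpa [List.replicate_succ', List.append_assoc] using
          GlideMove.m1 (c ++ List.replicate d ((0:ℕ),false)) e p cc hp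
      refine ReflTransGen.head step ?_
      simpa [List.replicate_succ', List.append_assoc] using
        bubble c (((0:ℕ),false) :: e) p cc hp d

lemma kex_cons (p : ℕ × Bool) (t : Komp) :
    kex (p :: t) = (if p.2 = true then 1 else 0) + kex t := by
  cases hc : p.2 <;> simp [kex, List.filter_cons, hc, Nat.add_comm]

@[simp] lemma kex_append (a b : Komp) : kex (a ++ b) = kex a + kex b := by
  simp [kex, List.filter_append]

@[simp] lemma kval_append (a b : Komp) : kval (a ++ b) = kval a ++ kval b := by
  simp [kval]

lemma kex_le_sum : ∀ s : Komp, (∀ p ∈ s, p.2 = true → 0 < p.1) → kex s ≤ (kval s).sum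
  | [], _ => le_refl 0
  | p :: t, h => by
      have ih := kex_le_sum t (fun q hq => h q (List.mem_cons_of_mem _ hq))
      have hsum : (kval (p :: t)).sum = p.1 + (kval t).sum := by simp [kval]
      rw [kex_cons, hsum]
      have : (if p.2 = true then 1 else 0) ≤ p.1 := by
        cases hc : p.2
        · simp
        · simpa [Nat.one_le_iff_ne_zero, Nat.pos_iff_ne_zero] using h p List.mem_cons_self hc
      omega

lemma zero_budget : ∀ s : Komp, (∀ p ∈ s, p.2 = true → 0 < p.1) →
    (kval s).sum = kex s → ∀ p ∈ s, p.1 ≠ 0 → p.2 = true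
  | [], _, _ => by simp
  | p :: t, h, hsum => by
      have ih := kex_le_sum t (fun q hq => h q (List.mem_cons_of_mem _ hq))
      have hsum' : (kval (p :: t)).sum = p.1 + (kval t).sum := by simp [kval]
      rw [kex_cons, hsum'] at hsum
      have hp1 : (if p.2 = true then 1 else 0) ≤ p.1 := by
        cases hc : p.2
        · simp
        · simpa [Nat.one_le_iff_ne_zero, Nat.pos_iff_ne_zero] using h p List.mem_cons_self hc
      have h1 : p.1 = (if p.2 = true then 1 else 0) := by omega
      have h2 : (kval t).sum = kex t := by omega
      intro q hq hq1
      rcases List.mem_cons.1 hq with rfl | hq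
      · cases hc : q.2
        · exfalso; rw [hc] at h1; simp at h1; exact hq1 h1
        · rfl
      · exact zero_budget t (fun r hr => h r (List.mem_cons_of_mem _ hr)) h2 q hq hq1

lemma blackFirst_of_append : ∀ (s r : Komp), BlackFirst (s ++ r) → BlackFirst s
  | [], _, _ => by simp [BlackFirst]
  | p :: t, r, h => by
      by_cases hp : p.1 = 0
      · have h' : BlackFirst (t ++ r) := by
          simpa [BlackFirst, List.dropWhile_cons, hp] using h
        have := blackFirst_of_append t r h'
        simpa [BlackFirst, List.dropWhile_cons, hp] using this
      · simpa [BlackFirst, List.dropWhile_cons, hp] using h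

lemma all_zero_of_blackFirst : ∀ (s r : Komp), BlackFirst (s ++ r) →
    (∀ p ∈ s, p.2 = true → 0 < p.1) →
    (∀ p ∈ s, p.1 ≠ 0 → p.2 = true) →
    ∀ p ∈ s, p = ((0:ℕ), false)
  | [], _, _, _, _ => by simp
  | p :: t, r, hbf, hred, hz => by
      by_cases hp : p.1 = 0
      · have hbf' : BlackFirst (t ++ r) := by
          simpa [BlackFirst, List.dropWhile_cons, hp] using hbf
        have ih := all_zero_of_blackFirst t r hbf'
          (fun q hq => hred q (List.mem_cons_of_mem _ hq))
          (fun q hq => hz q (List.mem_cons_of_mem _ hq))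
        intro q hq
        rcases List.mem_cons.1 hq with rfl | hq
        · have h2 : q.2 = false := by
            cases hc : q.2
            · rfl
            · exact absurd (hred q List.mem_cons_self hc) (by omega)
          exact Prod.ext hp h2
        · exact ih q hq
      · exfalso
        have h1 : p.2 = false := by
          have := hbf
          simpa [BlackFirst, List.dropWhile_cons, hp] using this
        have h2 := hz p List.mem_cons_self hp
        rw [h1] at h2; exact Bool.false_ne_true h2

lemma seg_all_zero (s : Komp) (hred : ∀ p ∈ s, p.2 = true → 0 < p.1)
    (hbf : BlackFirst s) (hsum : (kval s).sum = kex s) :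
    s = List.replicate s.length ((0:ℕ), false) := by
  have h2 := zero_budget s hred hsum
  have h3 := all_zero_of_blackFirst s [] (by simpa using hbf) hred h2
  exact List.eq_replicate_length.2 h3

lemma blackFirst_replicate_append (n : ℕ) (l : Komp) :
    BlackFirst (List.replicate n ((0:ℕ),false) ++ l) → BlackFirst l := by
  induction n with
  | zero => simpa using id
  | succ n ih =>
      intro h
      exact ih (by simpa [BlackFirst, List.replicate_succ, List.dropWhile_cons] using h)

lemma reach_block : ∀ (seg : Komp) (v : ℕ), seg ≠ [] →
    (kval seg).sum = v + kex seg →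
    (∀ p ∈ seg, p.2 = true → 0 < p.1) →
    BlackFirst seg →
    ReflTransGen GlideMove
      (List.replicate (seg.length - 1) ((0:ℕ), false) ++ [(v, false)]) seg := by
  intro seg
  induction seg using List.reverseRecOn with
  | nil => intro v h; exact absurd rfl h
  | append_singleton seg₁ e IH =>
    intro v _ hsum hred hbf
    obtain ⟨t, c'⟩ := e
    have hbf₁ : BlackFirst seg₁ := blackFirst_of_append _ _ hbf
    have hred₁ : ∀ p ∈ seg₁, p.2 = true → 0 < p.1 :=
      fun p hp => hred p (List.mem_append_left _ hp)
    have hK : kex seg₁ ≤ (kval seg₁).sum := kex_le_sum seg₁ hred₁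
    have hkexe : kex [((t:ℕ), c')] = if c' = true then 1 else 0 := by
      cases c' <;> simp [kex, List.filter_cons]
    have hkv : (kval [((t:ℕ), c')]).sum = t := by simp [kval]
    rw [kval_append, kex_append, hkexe, List.sum_append, hkv] at hsum
    have hlen1 : (seg₁ ++ [((t:ℕ), c')]).length - 1 = seg₁.length := by simp
    rw [hlen1]
    by_cases hSK : (kval seg₁).sum = kex seg₁
    · -- seg₁ is all zeros
      have hz1 : seg₁ = List.replicate seg₁.length ((0:ℕ), false) :=
        seg_all_zero seg₁ hred₁ hbf₁ hSK
      cases c' with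
      | false =>
          have htv : t = v := by simp at hsum; omega
          rw [htv, ← hz1]
      | true =>
          exfalso
          have ht0 : 0 < t := hred ((t:ℕ), true) (by simp) rfl
          have hbf2 : BlackFirst [((t:ℕ), true)] := by
            rw [hz1] at hbf
            exact blackFirst_replicate_append _ _ hbf
          have htne : ¬ ((t:ℕ) = 0) := by omega
          simp [BlackFirst, List.dropWhile_cons, htne] at hbf2
    · -- S > K, so we can split
      have hSgt : kex seg₁ < (kval seg₁).sum := lt_of_le_of_ne hK (Ne.symm hSK)
      have hz : 0 < seg₁.length := by
        rcases seg₁ with _ | ⟨a, l⟩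
        · exfalso; apply hSK; simp [kval, kex]
        · simp
      have hne₁ : seg₁ ≠ [] := List.length_pos_iff.1 hz
      have hrepl : List.replicate seg₁.length ((0:ℕ),false) ++ [((v:ℕ), false)] =
          List.replicate (seg₁.length - 1) ((0:ℕ),false) ++
            ((0:ℕ),false) :: ((v:ℕ), false) :: [] := by
        have h1 : seg₁.length = (seg₁.length - 1) + 1 := by omega
        rw [h1, List.replicate_succ', List.append_assoc]
        simp
      cases c' with
      | false =>
        have hsum2 : (kval seg₁).sum + t = v + kex seg₁ := by simpa using hsum
        set w : ℕ := v - t with hwdef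
        have hw_pos : 0 < w := by omega
        have hw_sum : (kval seg₁).sum = w + kex seg₁ := by omega
        have hstep : GlideMove
            (List.replicate seg₁.length ((0:ℕ),false) ++ [(v, false)])
            (List.replicate (seg₁.length - 1) ((0:ℕ),false) ++
              ((w:ℕ), false) :: ((t:ℕ), false) :: []) := by
          rw [hrepl]
          cases t with
          | zero =>
              have hwv : w = v := by omega
              rw [hwv]
              exact GlideMove.m1 _ _ v false (by omega)
          | succ t' =>
              exact GlideMove.m2 _ _ v w (t'+1) false hw_pos (by omega) (by omega)
        have lifted := reach_ctx [] [((t:ℕ), false)] (IH w hne₁ hw_sum hred₁ hbf₁)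
        refine ReflTransGen.head hstep ?_
        simpa [List.append_assoc] using lifted
      | true =>
        have hsum2 : (kval seg₁).sum + t = v + kex seg₁ + 1 := by simp at hsum; omega
        have ht0 : 0 < t := hred ((t:ℕ), true) (by simp) rfl
        set w : ℕ := v + 1 - t with hwdef
        have hw_pos : 0 < w := by omega
        have hw_sum : (kval seg₁).sum = w + kex seg₁ := by omega
        have hstep : GlideMove
            (List.replicate seg₁.length ((0:ℕ),false) ++ [(v, false)])
            (List.replicate (seg₁.length - 1) ((0:ℕ),false) ++
              ((w:ℕ), false) :: ((t:ℕ), true) :: []) := by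
          rw [hrepl]
          exact GlideMove.m3 _ _ v w t false hw_pos ht0 (by omega)
        have lifted := reach_ctx [] [((t:ℕ), true)] (IH w hne₁ hw_sum hred₁ hbf₁)
        refine ReflTransGen.head hstep ?_
        simpa [List.append_assoc] using lifted

lemma posPart_replicate_zero_append (k : ℕ) (l : List ℕ) :
    _root_.posPart (List.replicate k 0 ++ l) = _root_.posPart l := by
  induction k with
  | zero => simp
  | succ n ih => simpa [_root_.posPart, List.replicate_succ, List.filter_cons] using ih

lemma posPart_cons_ne (v : ℕ) (hv : v ≠ 0) (l : List ℕ) :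
    _root_.posPart (v :: l) = v :: _root_.posPart l := by
  simp [_root_.posPart, List.filter_cons, hv]

lemma posPart_nil_all_zero (a : List ℕ) (h : _root_.posPart a = []) :
    a = List.replicate a.length 0 := by
  refine List.eq_replicate_length.2 ?_
  intro b hb
  have := List.filter_eq_nil_iff.1 h b hb
  simpa using this

lemma toKomp_append (a b : List ℕ) : toKomp (a ++ b) = toKomp a ++ toKomp b := by
  simp [toKomp]

lemma toKomp_replicate (k : ℕ) :
    toKomp (List.replicate k 0) = List.replicate k ((0:ℕ), false) := by
  simp [toKomp]

lemma decomp (a : List ℕ) (h : _root_.posPart a ≠ []) :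
    ∃ (m : ℕ) (w : ℕ) (t : List ℕ), w ≠ 0 ∧ a = List.replicate m 0 ++ w :: t := by
  induction a with
  | nil => simp [_root_.posPart] at h
  | cons x a ih =>
      by_cases hx : x = 0
      · subst hx
        have h' : _root_.posPart a ≠ [] := by simpa [_root_.posPart, List.filter_cons] using h
        obtain ⟨m, w, t, hw, rfl⟩ := ih h'
        exact ⟨m+1, w, t, hw, by simp [List.replicate_succ]⟩
      · exact ⟨0, x, a, hx, by simp⟩

lemma take_repl_append (m i : ℕ) (w : ℕ) (t : List ℕ) (him : m ≤ i) :
    ((List.replicate m (0:ℕ) ++ w :: t).take (i+1)).sum = w + ((t.take (i - m)).sum) := by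
  rw [List.take_append]
  have h1 : (List.replicate m (0:ℕ)).take (i+1) = List.replicate m 0 := by
    rw [List.take_replicate]
    congr 1
    omega
  rw [h1]
  have h2 : (i + 1) - (List.replicate m (0:ℕ)).length = (i - m) + 1 := by
    simp; omega
  rw [h2]
  simp

lemma mesonic_main {b : List ℕ} {g : Komp} (h : MesonicGlide b g) :
    ∀ a : List ℕ, Dominates b a → _root_.posPart b = _root_.posPart a → IsGlide a g := by
  induction h with
  | zeros k =>
      intro a hdom hpp
      have h1 : _root_.posPart a = [] := by
        rw [← hpp]
        have := posPart_replicate_zero_append k []; simp at this; rw [this]; rfl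
      have hlen : a.length = k := by
        have := hdom.1
        simpa using this.symm
      have ha : a = List.replicate k 0 := by
        have h2 := posPart_nil_all_zero a h1
        rwa [hlen] at h2
      subst ha
      unfold IsGlide
      rw [toKomp_replicate]
  | block z v hv seg b' g' hlen hseg hm IH =>
      intro a hdom hpp
      have hvne : v ≠ 0 := hv.ne'
      rw [posPart_replicate_zero_append, posPart_cons_ne v hvne] at hpp
      have hane : _root_.posPart a ≠ [] := by rw [← hpp]; simp
      obtain ⟨m, w, t, hw, rfl⟩ := decomp a hane
      rw [posPart_replicate_zero_append, posPart_cons_ne w hw] at hpp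
      obtain ⟨hvw, hppt⟩ : v = w ∧ _root_.posPart b' = _root_.posPart t := by
        simpa using hpp
      subst hvw
      -- z ≤ m
      have hzm : z ≤ m := by
        by_contra hzm
        push_neg at hzm
        have key := hdom.2 (m + 1)
        have h1 : ((List.replicate m (0:ℕ) ++ v :: t).take (m+1)).sum = v := by
          have := take_repl_append m m v t le_rfl
          simpa using this
        have h2 : ((List.replicate z (0:ℕ) ++ v :: b').take (m+1)).sum = 0 := by
          rw [List.take_append]
          have e1 : (List.replicate z (0:ℕ)).take (m+1) = List.replicate (m+1) 0 := by
            rw [List.take_replicate]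
            congr 1
            omega
          have e2 : (m+1) - (List.replicate z (0:ℕ)).length = 0 := by
            simp
            omega
          rw [e1, e2]
          simp
        rw [h1, h2] at key
        omega
      obtain ⟨d, rfl⟩ : ∃ d, m = z + d := ⟨m - z, by omega⟩
      -- lengths
      have hblen : b'.length = d + t.length := by
        have := hdom.1
        simp at this
        omega
      -- dominance for the tail
      have hdom' : Dominates b' (List.replicate d 0 ++ t) := by
        constructor
        · simp
          omega
        · intro i
          have hL : ((List.replicate d (0:ℕ) ++ t).take i).sum = (t.take (i - d)).sum := by
            rw [List.take_append]
            simp [List.take_replicate]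
          rw [hL]
          rcases le_or_gt i d with hid | hid
          · have : i - d = 0 := by omega
            rw [this]
            simp
          · have key := hdom.2 (z + d + 1 + (i - d))
            have hA : ((List.replicate (z+d) (0:ℕ) ++ v :: t).take (z + d + 1 + (i - d))).sum
                = v + ((t.take (i - d)).sum) := by
              have := take_repl_append (z+d) ((z+d) + (i - d)) v t (by omega)
              have e : z + d + 1 + (i - d) = ((z+d) + (i - d)) + 1 := by omega
              rw [e]
              simpa using this
            have hB : ((List.replicate z (0:ℕ) ++ v :: b').take (z + d + 1 + (i - d))).sum
                = v + ((b'.take i).sum) := by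
              have := take_repl_append z ((z+d) + (i - d)) v b' (by omega)
              have e : z + d + 1 + (i - d) = ((z+d) + (i - d)) + 1 := by omega
              have e2 : (z+d) + (i - d) - z = i := by omega
              rw [e]
              rw [this, e2]
            rw [hA, hB] at key
            omega
      have IHres := IH (List.replicate d 0 ++ t) hdom'
        (by rw [posPart_replicate_zero_append]; exact hppt)
      have IHres' : ReflTransGen GlideMove
          (List.replicate d ((0:ℕ),false) ++ toKomp t) g' := by
        unfold IsGlide at IHres
        rwa [toKomp_append, toKomp_replicate] at IHres
      -- block reach
      have hsegne : seg ≠ [] := by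
        intro hsn
        rw [hsn] at hlen
        simp at hlen
      have hrb := reach_block seg v hsegne hseg.1 hseg.2.1 hseg.2.2.1
      have hz' : seg.length - 1 = z := by omega
      rw [hz'] at hrb
      have step2 := reach_ctx [] (List.replicate d ((0:ℕ),false) ++ toKomp t) hrb
      have step3 := reach_ctx seg [] IHres'
      unfold IsGlide
      have e1 : toKomp (List.replicate (z+d) 0 ++ v :: t) =
          List.replicate z ((0:ℕ),false) ++ List.replicate d ((0:ℕ),false) ++
            ((v:ℕ), false) :: toKomp t := by
        have e0 : toKomp (v :: t) = ((v:ℕ),false) :: toKomp t := rfl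
        rw [toKomp_append, toKomp_replicate, List.replicate_add, e0]
      rw [e1]
      have s2 : ReflTransGen GlideMove
          (List.replicate z ((0:ℕ),false) ++
            ((v:ℕ),false) :: (List.replicate d ((0:ℕ),false) ++ toKomp t))
          (seg ++ (List.replicate d ((0:ℕ),false) ++ toKomp t)) := by
        simpa [List.append_assoc] using step2
      have s3 : ReflTransGen GlideMove
          (seg ++ (List.replicate d ((0:ℕ),false) ++ toKomp t)) (seg ++ g') := by
        simpa using step3
      exact (bubble (List.replicate z ((0:ℕ),false)) (toKomp t) v false hv d).trans
        (s2.trans s3)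

theorem stmt2 (a : List ℕ) :
    (∀ g : Komp, MesonicGlide a g → IsGlide a g) ∧
    (∀ (b : List ℕ) (g : Komp), Dominates b a → posPart b = posPart a →
      MesonicGlide b g → IsGlide a g) := by
  constructor
  · intro g hg
    exact mesonic_main hg a ⟨rfl, fun i => le_refl _⟩ rfl
  · intro b g hdom hpp hg
    exact mesonic_main hg a hdom hpp
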